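/- For every good decomposition (I_1,...,I_n) of [q], the polynomial f_{I_1,...,I_n}(x_1,...,x_n) = ∏_{j=1}^n ∏_{t ∈ i(I_j)} (x_j − t) vanishes at every point of J(n,q). -/

import Mathlib

theorem stmt_3 {F : Type*} [Field F] (n q : ℕ) (hn : 1 ≤ n) (hq : 1 ≤ q)
    (i : Fin q → F) (hi : Function.Injective i)
    (I : Fin n → Finset (Fin q))
    (hcover : ∀ a : Fin q, ∃ j, a ∈ I j)
    (horder : ∀ j k : Fin n, j < k → ∀ a ∈ I j, ∀ b ∈ I k, a < b)
    (v : Fin n → Fin q) (hv : Monotone v) :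
    MvPolynomial.eval (fun j => i (v j))
      (∏ j : Fin n, ∏ t ∈ I j, (MvPolynomial.X j - MvPolynomial.C (i t))) = 0 := by
  -- choose g j = index of set containing v j
  choose g hg using fun j => hcover (v j)
  have hgm : Monotone g := by
    intro a b hab
    by_contra h
    push_neg at h
    exact absurd (horder _ _ h _ (hg b) _ (hg a)) (not_lt.2 (hv hab))
  -- fixed point
  have hfix : ∃ j, g j = j := by
    have hne : Nonempty (Fin n) := ⟨⟨0, hn⟩⟩
    set S : Finset (Fin n) := Finset.univ.filter (fun j => j ≤ g j) with hS
    have hSne : S.Nonempty := by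
      refine ⟨⟨0, hn⟩, ?_⟩
      simp only [hS, Finset.mem_filter, Finset.mem_univ, true_and]
      exact Fin.mk_le_of_le_val (Nat.zero_le _)
    set m := S.max' hSne with hm
    have hmS : m ∈ S := S.max'_mem hSne
    have hmle : m ≤ g m := by simpa [hS] using hmS
    refine ⟨m, le_antisymm ?_ hmle⟩
    by_contra h
    push_neg at h
    have h2 : g m ∈ S := by
      simp only [hS, Finset.mem_filter, Finset.mem_univ, true_and]
      exact hgm hmle
    have := S.le_max' _ h2
    exact absurd (lt_of_lt_of_le h this) (lt_irrefl m)
  obtain ⟨j, hj⟩ := hfix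
  rw [map_prod]
  apply Finset.prod_eq_zero (Finset.mem_univ j)
  rw [map_prod]
  apply Finset.prod_eq_zero (hj ▸ hg j)
  simp
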